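/- For every natural number n ≥ 3, the equitable chromatic number of the double wheel graph DW_n equals n+1; that is, DW_n admits an equitable proper coloring using exactly n+1 colors, and it admits no equitable proper coloring using fewer colors. -/

import Mathlib

open Finset

/-- The size of the color class of color `i` under the coloring `c`. -/
def classSize {V : Type*} [Fintype V] {k : ℕ} (c : V → Fin k) (i : Fin k) : ℕ :=
  (Finset.univ.filter (fun v => c v = i)).card

/-- The equitable coloring mean `μ = (∑ i·θ_i)/N` (colors indexed `1,…,k`). -/
def eqMean {V : Type*} [Fintype V] {k : ℕ} (c : V → Fin k) : ℚ :=
  (∑ i : Fin k, (((i : ℕ) : ℚ) + 1) * (classSize c i : ℚ)) / (Fintype.card V : ℚ)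

/-- The equitable coloring variance `σ² = (∑ i²·θ_i)/N − μ²`. -/
def eqVar {V : Type*} [Fintype V] {k : ℕ} (c : V → Fin k) : ℚ :=
  (∑ i : Fin k, (((i : ℕ) : ℚ) + 1) ^ 2 * (classSize c i : ℚ)) / (Fintype.card V : ℚ)
    - (eqMean c) ^ 2

/-- The double wheel graph `DW_n`: `none` is the central vertex, `some (Sum.inl i)` the
vertices of the first cycle, `some (Sum.inr i)` the vertices of the second cycle. -/
def doubleWheelGraph (n : ℕ) : SimpleGraph (Option (Fin n ⊕ Fin n)) :=
  SimpleGraph.fromRel (fun a b =>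
    match a, b with
    | none, some _ => True
    | some (Sum.inl i), some (Sum.inl j) => j.val = (i.val + 1) % n
    | some (Sum.inr i), some (Sum.inr j) => j.val = (i.val + 1) % n
    | _, _ => False)

def dwColor (n : ℕ) : Option (Fin n ⊕ Fin n) → Fin (n + 1)
  | none => Fin.last n
  | some (Sum.inl i) => i.castSucc
  | some (Sum.inr i) => i.castSucc

lemma dw_adj_none {n : ℕ} (x : Fin n ⊕ Fin n) : (doubleWheelGraph n).Adj none (some x) := by
  rw [doubleWheelGraph, SimpleGraph.fromRel_adj]
  exact ⟨by simp, Or.inl trivial⟩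

lemma dwColor_class {n : ℕ} (i : Fin (n + 1)) :
    (univ.filter (fun v => dwColor n v = i)) =
      if h : (i : ℕ) < n then {some (Sum.inl ⟨i, h⟩), some (Sum.inr ⟨i, h⟩)} else {none} := by
  have hlast : ((Fin.last n : Fin (n+1)) : ℕ) = n := rfl
  refine Finset.ext fun v => ?_
  match v with
  | none =>
    rw [mem_filter]; simp only [mem_filter, mem_univ, true_and, dwColor]
    split
    · rename_i h
      simp only [mem_insert, mem_singleton]
      constructor
      · intro he
        rw [← he, hlast] at h
        omega
      · intro he; cases he <;> simp_all
    · rename_i h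
      have : Fin.last n = i := Fin.ext (by rw [hlast]; have := i.isLt; omega)
      simp [this]
  | some (Sum.inl j) =>
    rw [mem_filter]; simp only [mem_filter, mem_univ, true_and, dwColor]
    split
    · rename_i h
      simp only [mem_insert, mem_singleton, Option.some_inj]
      constructor
      · intro he
        have hv : (j : ℕ) = (i : ℕ) := by
          have : ((j.castSucc : Fin (n+1)) : ℕ) = (i : ℕ) := by rw [he]
          simpa using this
        exact Or.inl (congrArg Sum.inl (Fin.ext hv))
      · rintro (h2 | h2) <;> cases h2
        · apply Fin.ext; simp
    · rename_i h
      have hi : i = Fin.last n := by apply Fin.ext; rw [hlast]; have := i.isLt; omega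
      subst hi
      simpa using (Fin.castSucc_lt_last j).ne
  | some (Sum.inr j) =>
    rw [mem_filter]; simp only [mem_filter, mem_univ, true_and, dwColor]
    split
    · rename_i h
      simp only [mem_insert, mem_singleton, Option.some_inj]
      constructor
      · intro he
        have hv : (j : ℕ) = (i : ℕ) := by
          have : ((j.castSucc : Fin (n+1)) : ℕ) = (i : ℕ) := by rw [he]
          simpa using this
        exact Or.inr (congrArg Sum.inr (Fin.ext hv))
      · rintro (h2 | h2) <;> cases h2
        · apply Fin.ext; simp
    · rename_i h
      have hi : i = Fin.last n := by apply Fin.ext; rw [hlast]; have := i.isLt; omega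
      subst hi
      simpa using (Fin.castSucc_lt_last j).ne

lemma dwColor_classSize {n : ℕ} (i : Fin (n + 1)) :
    classSize (dwColor n) i = if (i : ℕ) < n then 2 else 1 := by
  rw [classSize, dwColor_class]
  split
  · rw [Finset.card_insert_of_notMem (by simp), Finset.card_singleton]
  · rw [Finset.card_singleton]

theorem doubleWheel_equitableChromatic (n : ℕ) (hn : 3 ≤ n) :
    (∃ c : Option (Fin n ⊕ Fin n) → Fin (n + 1),
        (∀ u v, (doubleWheelGraph n).Adj u v → c u ≠ c v) ∧
        Function.Surjective c ∧
        (∀ i j : Fin (n + 1), classSize c i ≤ classSize c j + 1)) ∧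
    (∀ m : ℕ, m < n + 1 →
      ¬ (∃ c : Option (Fin n ⊕ Fin n) → Fin (m),
        (∀ u v, (doubleWheelGraph n).Adj u v → c u ≠ c v) ∧
        Function.Surjective c ∧
        (∀ i j : Fin (m), classSize c i ≤ classSize c j + 1))) := by
  constructor
  · refine ⟨dwColor n, ?_, ?_, ?_⟩
    · intro u v hadj
      rw [doubleWheelGraph, SimpleGraph.fromRel_adj] at hadj
      obtain ⟨hne, hrel⟩ := hadj
      match u, v with
      | none, none => exact absurd rfl hne
      | none, some (Sum.inl j) => exact (Fin.castSucc_lt_last j).ne'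
      | none, some (Sum.inr j) => exact (Fin.castSucc_lt_last j).ne'
      | some (Sum.inl i), none => exact (Fin.castSucc_lt_last i).ne
      | some (Sum.inr i), none => exact (Fin.castSucc_lt_last i).ne
      | some (Sum.inl i), some (Sum.inl j) =>
        intro h
        exact hne (by rw [show i = j from Fin.castSucc_inj.mp h])
      | some (Sum.inr i), some (Sum.inr j) =>
        intro h
        exact hne (by rw [show i = j from Fin.castSucc_inj.mp h])
      | some (Sum.inl i), some (Sum.inr j) => rcases hrel with h | h <;> exact h.elim
      | some (Sum.inr i), some (Sum.inl j) => rcases hrel with h | h <;> exact h.elim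
    · intro i
      by_cases h : (i : ℕ) < n
      · exact ⟨some (Sum.inl ⟨i, h⟩), Fin.ext (by simp [dwColor])⟩
      · refine ⟨none, ?_⟩
        apply Fin.ext
        show n = (i : ℕ)
        have := i.isLt
        omega
    · intro i j
      rw [dwColor_classSize, dwColor_classSize]
      split <;> split <;> omega
  · rintro m hm ⟨c, hp, hs, he⟩
    have hcard : ∑ i : Fin m, classSize c i = 2 * n + 1 := by
      have h1 := Finset.card_eq_sum_card_fiberwise
        (s := (univ : Finset (Option (Fin n ⊕ Fin n)))) (t := univ) (f := c)
        (fun x _ => mem_univ _)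
      have h2 : (univ : Finset (Option (Fin n ⊕ Fin n))).card = 2 * n + 1 := by
        simp [Finset.card_univ, Fintype.card_option, Fintype.card_sum]
        ring
      rw [h2] at h1
      exact h1.symm
    have hc0 : classSize c (c none) = 1 := by
      have hf : (univ.filter (fun v => c v = c none)) = {none} := by
        ext v
        match v with
        | none => simp
        | some x =>
          simp only [mem_filter, mem_univ, true_and, mem_singleton]
          constructor
          · intro h
            exact absurd h.symm (hp none (some x) (dw_adj_none x))
          · intro h; cases h
      rw [classSize, hf, Finset.card_singleton]
    have hbound : ∀ i : Fin m, classSize c i ≤ 2 := by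
      intro i
      have := he i (c none)
      omega
    have : ∑ i : Fin m, classSize c i ≤ 2 * m := by
      calc ∑ i : Fin m, classSize c i ≤ ∑ _i : Fin m, 2 :=
            Finset.sum_le_sum (fun i _ => hbound i)
        _ = 2 * m := by simp [Finset.sum_const, Finset.card_univ, mul_comm]
    omega
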